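/- Let (Ω, 𝓕, μₚ) be a probability space, W : Ω → ℝ a nonnegative measurable function with ∫ W dμₚ = 1, and R : Ω → ℝ measurable and bounded. Fix c > 0 with ∫ min(W, c) dμₚ > 0. Let Z : ℕ → Ω' → Ω be an i.i.d. sequence of random variables on a probability space (Ω', μ') with common law μₚ. Then almost surely under μ', the normalised capped importance sampling ratio converges: (∑_{i < n} min(W(Z_i), c) · R(Z_i)) / (∑_{i < n} min(W(Z_i), c)) → (∫ min(W, c) · R dμₚ) / (∫ min(W, c) dμₚ) as n → ∞. (Asymptotic behaviour of the NCIS estimator with max-capping.) -/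

import Mathlib

open MeasureTheory Filter
open ProbabilityTheory in

/-- Asymptotic behaviour of the NCIS estimator with max-capping: along an i.i.d.
sequence with common law `μₚ`, the ratio of the empirical mean of `min(W,c)·R` to the
empirical mean of `min(W,c)` converges almost surely to
`(∫ min(W,c)·R dμₚ) / (∫ min(W,c) dμₚ)`. -/
theorem ncis_asymptotic
    {Ω Ω' : Type*} [MeasurableSpace Ω] [MeasurableSpace Ω']
    (μₚ : Measure Ω) [IsProbabilityMeasure μₚ]
    (W : Ω → ℝ) (hW_meas : Measurable W) (hW_nonneg : ∀ ω, 0 ≤ W ω)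
    (hW_int : ∫ ω, W ω ∂μₚ = 1)
    (R : Ω → ℝ) (hR_meas : Measurable R) (C : ℝ) (hR_bdd : ∀ ω, |R ω| ≤ C)
    (c : ℝ) (hc : 0 < c) (hpos : 0 < ∫ ω, min (W ω) c ∂μₚ)
    (μ' : Measure Ω') [IsProbabilityMeasure μ']
    (Z : ℕ → Ω' → Ω) (hZ_meas : ∀ i, Measurable (Z i))
    (hZ_indep : ProbabilityTheory.iIndepFun Z μ')
    (hZ_law : ∀ i, Measure.map (Z i) μ' = μₚ) :
    ∀ᵐ ω' ∂μ', Tendsto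
      (fun n : ℕ =>
        (∑ i ∈ Finset.range n, min (W (Z i ω')) c * R (Z i ω')) /
        (∑ i ∈ Finset.range n, min (W (Z i ω')) c))
      atTop
      (nhds ((∫ ω, min (W ω) c * R ω ∂μₚ) / (∫ ω, min (W ω) c ∂μₚ))) := by
  set f : Ω → ℝ := fun ω => min (W ω) c * R ω with hf
  set g : Ω → ℝ := fun ω => min (W ω) c with hg
  have hg_meas : Measurable g := hW_meas.min measurable_const
  have hf_meas : Measurable f := hg_meas.mul hR_meas
  -- boundedness
  have hg_bd : ∀ ω, |g ω| ≤ c := fun ω => by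
    rw [abs_of_nonneg (le_min (hW_nonneg ω) hc.le)]; exact min_le_right _ _
  have hf_bd : ∀ ω, |f ω| ≤ c * |C| := fun ω => by
    rw [abs_mul]
    exact mul_le_mul (hg_bd ω) ((hR_bdd ω).trans (le_abs_self C)) (abs_nonneg _) hc.le
  have hint : ∀ (h : Ω → ℝ) (hm : Measurable h) (B : ℝ) (hb : ∀ ω, |h ω| ≤ B) (i : ℕ),
      Integrable (fun ω' => h (Z i ω')) μ' := by
    intro h hm B hb i
    have : Integrable h μₚ := by
      refine ⟨hm.aestronglyMeasurable, ?_⟩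
      exact (HasFiniteIntegral.of_bounded (C := B) (Filter.Eventually.of_forall hb))
    rw [← hZ_law i] at this
    exact (integrable_map_measure hm.aestronglyMeasurable (hZ_meas i).aemeasurable).mp this
  have hident : ∀ (h : Ω → ℝ) (hm : Measurable h) (i : ℕ),
      IdentDistrib (fun ω' => h (Z i ω')) (fun ω' => h (Z 0 ω')) μ' μ' := by
    intro h hm i
    exact ⟨(hm.comp (hZ_meas i)).aemeasurable, (hm.comp (hZ_meas 0)).aemeasurable, by
      rw [show (fun ω' => h (Z i ω')) = h ∘ Z i from rfl,
        show (fun ω' => h (Z 0 ω')) = h ∘ Z 0 from rfl,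
        ← Measure.map_map hm (hZ_meas i), ← Measure.map_map hm (hZ_meas 0), hZ_law, hZ_law]⟩
  have hindep : ∀ (h : Ω → ℝ) (hm : Measurable h),
      Pairwise (Function.onFun (IndepFun · · μ') fun i ω' => h (Z i ω')) := by
    intro h hm i j hij
    exact (hZ_indep.indepFun hij).comp hm hm
  have hEf : ∫ ω', f (Z 0 ω') ∂μ' = ∫ ω, f ω ∂μₚ := by
    rw [← hZ_law 0, integral_map (hZ_meas 0).aemeasurable hf_meas.aestronglyMeasurable]
  have hEg : ∫ ω', g (Z 0 ω') ∂μ' = ∫ ω, g ω ∂μₚ := by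
    rw [← hZ_law 0, integral_map (hZ_meas 0).aemeasurable hg_meas.aestronglyMeasurable]
  have hlawf := strong_law_ae_real (fun i ω' => f (Z i ω')) (hint f hf_meas _ hf_bd 0)
    (hindep f hf_meas) (hident f hf_meas)
  have hlawg := strong_law_ae_real (fun i ω' => g (Z i ω')) (hint g hg_meas _ hg_bd 0)
    (hindep g hg_meas) (hident g hg_meas)
  filter_upwards [hlawf, hlawg] with ω' hf' hg'
  rw [hEf] at hf'; rw [hEg] at hg'
  have key : Tendsto (fun n : ℕ => ((∑ i ∈ Finset.range n, f (Z i ω')) / n) /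
      ((∑ i ∈ Finset.range n, g (Z i ω')) / n)) atTop
      (nhds ((∫ ω, f ω ∂μₚ) / (∫ ω, g ω ∂μₚ))) := hf'.div hg' (ne_of_gt hpos)
  refine key.congr' ?_
  filter_upwards [eventually_ge_atTop 1] with n hn
  have hn' : (n : ℝ) ≠ 0 := Nat.cast_ne_zero.mpr (by omega)
  rw [div_div_div_cancel_right₀ hn']
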